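/- Second stability inequality: under the same hypotheses, for every k > 1 and t ≥ 0: (d/dt)(Σ_{j=0}^{k−1} b_j(t)² + ½ b_k(t)²) ≤ −Σ_{j=0}^{k−1} d_j(t)² + λ^{(k−1)/3} |b(t)|, where |b| is the ℓ² norm of b. -/

import Mathlib

open Real Set MeasureTheory Finset Filter

noncomputable def lam : ℝ := (2:ℝ) ^ ((5:ℝ)/2)

/-- Right-hand side of the dyadic system: `da_j/dt = λ^{j-1} a_{j-1}² − λ^j a_j a_{j+1} + f_j`
with `a_{-1}=0`, forcing `f_0 > 0`, `f_j = 0` for `j ≥ 1`. -/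
noncomputable def dyadicRHS (f0 : ℝ) (a : ℕ → ℝ) : ℕ → ℝ
  | 0 => -(a 0 * a 1) + f0
  | (j+1) => lam ^ j * (a j)^2 - lam ^ (j+1) * a (j+1) * a (j+2)

/-- A weak (= classical) solution of the dyadic system on `[0,∞)`: an `ℓ²`-valued
function whose components are differentiable and satisfy the ODEs. -/
def IsDyadicSolution (f0 : ℝ) (a : ℝ → ℕ → ℝ) : Prop :=
  (∀ t ∈ Ici (0:ℝ), Summable (fun j => (a t j)^2)) ∧
  (∀ j, ∀ t ∈ Ici (0:ℝ), HasDerivWithinAt (fun s => a s j) (dyadicRHS f0 (a t) j) (Ici 0) t)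

/-- Deviation from the fixed point: `b_j = a_j − λ^{−j/3}`. -/
noncomputable def bvar (a : ℝ → ℕ → ℝ) (t : ℝ) (j : ℕ) : ℝ := a t j - lam ^ (-(j:ℝ)/3)

/-- Differenced variables: `d_0 = λ^{−1/6} b_0`, `d_j = λ^{(j−1)/3}(λ^{1/6} b_j − λ^{−1/6} b_{j−1})`. -/
noncomputable def dvar (a : ℝ → ℕ → ℝ) (t : ℝ) : ℕ → ℝ
  | 0 => lam ^ (-(1:ℝ)/6) * bvar a t 0
  | (i+1) => lam ^ ((i:ℝ)/3) * (lam ^ ((1:ℝ)/6) * bvar a t (i+1) - lam ^ (-(1:ℝ)/6) * bvar a t i)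

open Topology

lemma st2_lam_pos : 0 < lam := Real.rpow_pos_of_pos (by norm_num) _
noncomputable def zz : ℝ := lam ^ ((1:ℝ)/6)
lemma st2_zz_eq : zz = (2:ℝ) ^ ((5:ℝ)/12) := by
  rw [zz, lam, ← Real.rpow_mul (by norm_num : (0:ℝ) ≤ 2)]
  norm_num
lemma st2_zz_pos : 0 < zz := Real.rpow_pos_of_pos st2_lam_pos _
lemma st2_zz_ne : zz ≠ 0 := st2_zz_pos.ne'
lemma st2_zz_one_lt : 1 < zz := by
  rw [st2_zz_eq]
  have := Real.rpow_lt_rpow_of_exponent_lt (x := 2) one_lt_two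
    (by norm_num : (0:ℝ) < 5/12)
  simpa using this
lemma st2_zz_le_two : zz ≤ 2 := by
  rw [st2_zz_eq]
  have := Real.rpow_le_rpow_of_exponent_le (x := 2) one_le_two
    (by norm_num : (5:ℝ)/12 ≤ 1)
  simpa using this
lemma st2_zz6 : zz ^ (6:ℕ) = lam := by
  rw [zz, ← Real.rpow_natCast (lam ^ ((1:ℝ)/6)) 6, ← Real.rpow_mul st2_lam_pos.le]
  norm_num
lemma st2_lam_npow (j : ℕ) : (lam : ℝ) ^ j = (zz ^ j) ^ 6 := by
  rw [← pow_mul, mul_comm j 6, pow_mul, st2_zz6]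
lemma st2_third (j : ℕ) : lam ^ ((j:ℝ)/3) = (zz ^ j) ^ 2 := by
  rw [zz, ← Real.rpow_natCast (lam ^ ((1:ℝ)/6)) j, ← Real.rpow_mul st2_lam_pos.le,
    ← Real.rpow_natCast (lam ^ (1/6 * (j:ℝ))) 2, ← Real.rpow_mul st2_lam_pos.le]
  congr 1
  push_cast
  ring
lemma st2_c_eq (j : ℕ) : lam ^ (-(j:ℝ)/3) = ((zz ^ j) ^ 2)⁻¹ := by
  rw [neg_div, Real.rpow_neg st2_lam_pos.le, st2_third]
lemma st2_sixth : lam ^ ((1:ℝ)/6) = zz := rfl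
lemma st2_sixth_neg : lam ^ (-(1:ℝ)/6) = zz⁻¹ := by
  rw [neg_div, Real.rpow_neg st2_lam_pos.le, st2_sixth]
lemma st2_f0 : lam ^ (-(1:ℝ)/3) = (zz ^ 2)⁻¹ := by
  have h := st2_c_eq 1
  simpa using h

lemma st2_apos {f0 : ℝ} (hf0 : 0 ≤ f0) {a : ℝ → ℕ → ℝ}
    (ha : IsDyadicSolution f0 a) (h0 : ∀ j, 0 ≤ a 0 j) :
    ∀ j, ∀ t ∈ Ici (0:ℝ), 0 ≤ a t j := by
  have hcont : ∀ i, ContinuousOn (fun s => a s i) (Ici 0) :=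
    fun i s hs => (ha.2 i s hs).continuousWithinAt
  intro j T hT
  simp only [Set.mem_Ici] at hT
  have hcg : ContinuousOn (fun s => lam ^ j * a s (j+1)) (Icc (0:ℝ) T) :=
    continuousOn_const.mul ((hcont (j+1)).mono Icc_subset_Ici_self)
  obtain ⟨K, hK⟩ := isCompact_Icc.exists_bound_of_continuousOn hcg
  set S : Set ℝ := {s | s ∈ Icc (0:ℝ) T ∧ 0 ≤ a s j} with hSdef
  have hS0 : (0:ℝ) ∈ S := ⟨⟨le_refl 0, hT⟩, h0 j⟩
  have hSc : IsClosed S := by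
    have hEq : S = Icc (0:ℝ) T ∩ (fun s => a s j) ⁻¹' Ici 0 := by
      ext s; simp [hSdef, Set.mem_setOf_eq, Set.mem_inter_iff]
    rw [hEq]
    exact ContinuousOn.preimage_isClosed_of_isClosed
      ((hcont j).mono Icc_subset_Ici_self) isClosed_Icc isClosed_Ici
  have hbdd : BddAbove S := ⟨T, fun s hs => hs.1.2⟩
  set c := sSup S with hc
  have hcS : c ∈ S := hSc.csSup_mem ⟨0, hS0⟩ hbdd
  have hc0 : 0 ≤ c := hcS.1.1
  have hcT : c ≤ T := hcS.1.2
  have hcj : 0 ≤ a c j := hcS.2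
  rcases eq_or_lt_of_le hcT with heq | hlt
  · rw [← heq]; exact hcj
  · have hneg : ∀ s, c < s → s ≤ T → a s j < 0 := by
      intro s hs1 hs2
      by_contra hcon
      push_neg at hcon
      have hmem : s ∈ S := ⟨⟨le_trans hc0 hs1.le, hs2⟩, hcon⟩
      exact absurd (le_csSup hbdd hmem) (not_le.mpr hs1)
    have hczero : a c j = 0 := by
      by_contra hne
      have hpos : 0 < a c j := lt_of_le_of_ne hcj (Ne.symm hne)
      have hev : ∀ᶠ s in 𝓝[Ici 0] c, 0 < a s j :=
        (hcont j c (Set.mem_Ici.mpr hc0)).eventually (eventually_gt_nhds hpos)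
      have hmono : 𝓝[Ioc c T] c ≤ 𝓝[Ici 0] c :=
        nhdsWithin_mono _ (fun s hs => le_trans hc0 hs.1.le)
      have hne2 : (𝓝[Ioc c T] c).NeBot := by
        rw [← mem_closure_iff_nhdsWithin_neBot, closure_Ioc hlt.ne]
        exact ⟨le_refl c, hlt.le⟩
      obtain ⟨s, hspos, hsIoc⟩ := ((hev.filter_mono hmono).and self_mem_nhdsWithin).exists
      exact absurd hspos (not_lt.mpr (hneg s hsIoc.1 hsIoc.2).le)
    set g : ℝ → ℝ := fun s => a s j * Real.exp (-K * s) with hg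
    have hKge : ∀ s ∈ Icc (0:ℝ) T, -K ≤ lam ^ j * a s (j+1) := by
      intro s hs
      have := hK s hs
      rw [Real.norm_eq_abs] at this
      exact (abs_le.mp this).1
    have hderiv : ∀ s ∈ Ioo c T,
        HasDerivAt g ((dyadicRHS f0 (a s) j) * Real.exp (-K*s)
          + a s j * (Real.exp (-K*s) * -K)) s := by
      intro s hs
      have hs0 : 0 < s := lt_of_le_of_lt hc0 hs.1
      have hda : HasDerivAt (fun τ => a τ j) (dyadicRHS f0 (a s) j) s :=
        (ha.2 j s (le_of_lt hs0)).hasDerivAt (Ici_mem_nhds hs0)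
      have hexp : HasDerivAt (fun τ : ℝ => Real.exp (-K * τ)) (Real.exp (-K * s) * -K) s := by
        have h1 : HasDerivAt (fun τ : ℝ => -K * τ) (-K) s := by
          simpa using (hasDerivAt_id s).const_mul (-K)
        simpa using h1.exp
      exact hda.mul hexp
    have hderiv_nonneg : ∀ s ∈ interior (Icc c T), 0 ≤ deriv g s := by
      rw [interior_Icc]
      intro s hs
      rw [(hderiv s hs).deriv]
      have hs0 : 0 ≤ s := le_trans hc0 hs.1.le
      have hsa : a s j < 0 := hneg s hs.1 hs.2.le
      have hKb : -K ≤ lam ^ j * a s (j+1) := hKge s ⟨hs0, hs.2.le⟩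
      have hna : (0:ℝ) ≤ -a s j := by linarith
      have hstep : K * a s j ≤ -(lam ^ j * a s j * a s (j+1)) := by
        nlinarith [mul_le_mul_of_nonneg_left hKb hna]
      have hrhs : K * a s j ≤ dyadicRHS f0 (a s) j := by
        cases j with
        | zero =>
          simp only [dyadicRHS]
          nlinarith [hstep, hf0]
        | succ i =>
          simp only [dyadicRHS]
          have hnn : 0 ≤ lam ^ i * (a s i)^2 :=
            mul_nonneg (pow_pos st2_lam_pos i).le (sq_nonneg _)
          nlinarith [hstep, hnn]
      have he : 0 < Real.exp (-K * s) := Real.exp_pos _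
      nlinarith [mul_nonneg he.le (sub_nonneg.mpr hrhs)]
    have hdiff : DifferentiableOn ℝ g (interior (Icc c T)) := by
      rw [interior_Icc]
      exact fun s hs => ((hderiv s hs).differentiableAt).differentiableWithinAt
    have hgc : ContinuousOn g (Icc c T) := by
      apply ContinuousOn.mul
      · exact (hcont j).mono (fun s hs => le_trans hc0 hs.1)
      · exact (Real.continuous_exp.comp (continuous_const.mul continuous_id)).continuousOn
    have hmono := monotoneOn_of_deriv_nonneg (convex_Icc c T) hgc hdiff hderiv_nonneg
    have hfin := hmono (left_mem_Icc.mpr hlt.le) (right_mem_Icc.mpr hlt.le) hlt.le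
    have h2 : 0 ≤ a T j * Real.exp (-K * T) := by
      have h3 : a c j * Real.exp (-K * c) ≤ a T j * Real.exp (-K * T) := by
        simpa [hg] using hfin
      rw [hczero] at h3
      simpa using h3
    nlinarith [h2, Real.exp_pos (-K * T)]

lemma st2_key (a : ℝ → ℕ → ℝ) (t : ℝ) : ∀ m : ℕ,
    (∑ j ∈ Finset.range (m+1), 2 * bvar a t j * dyadicRHS (lam ^ (-(1:ℝ)/3)) (a t) j)
      + bvar a t (m+1) * dyadicRHS (lam ^ (-(1:ℝ)/3)) (a t) (m+1)
    = -(∑ j ∈ Finset.range (m+1), (dvar a t j)^2)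
      - (zz^m)^6 * a t (m+1) * (bvar a t m)^2
      - (zz^m)^4 * zz^2 * (bvar a t (m+1))^2
      - (zz^m)^6 * zz^6 * a t (m+1) * bvar a t (m+1) * bvar a t (m+2) := by
  have hz := st2_zz_ne
  have hA : ∀ j, a t j = bvar a t j + ((zz ^ j)^2)⁻¹ := fun j => by
    rw [bvar, st2_c_eq]; ring
  intro m
  induction m with
  | zero =>
    have e0 : dyadicRHS (lam ^ (-(1:ℝ)/3)) (a t) 0 = -(a t 0 * a t 1) + (zz^2)⁻¹ := by
      rw [dyadicRHS, st2_f0]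
    have e1 : dyadicRHS (lam ^ (-(1:ℝ)/3)) (a t) 1 = (a t 0)^2 - zz^6 * a t 1 * a t 2 := by
      show lam ^ 0 * (a t 0)^2 - lam ^ 1 * a t 1 * a t 2 = _
      rw [pow_zero, pow_one, ← st2_zz6]; ring
    have ed : dvar a t 0 = zz⁻¹ * bvar a t 0 := by
      rw [dvar, st2_sixth_neg]
    have g0 : a t 0 = bvar a t 0 + 1 := by rw [hA 0]; norm_num
    have g1 : a t 1 = bvar a t 1 + (zz^2)⁻¹ := by rw [hA 1]; ring
    have g2 : a t 2 = bvar a t 2 + (zz^4)⁻¹ := by rw [hA 2]; ring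
    simp only [zero_add, Finset.sum_range_one]
    rw [e0, e1, ed, g0, g1, g2]
    simp only [pow_zero, one_pow, one_mul]
    field_simp
    ring
  | succ n ih =>
    have hQne : (zz^n : ℝ) ≠ 0 := pow_ne_zero _ hz
    have p2 : (zz^(n+1))^2 = (zz^n)^2 * zz^2 := by ring
    have p2' : (zz^(n+2))^2 = (zz^n)^2 * zz^4 := by ring
    have p2'' : (zz^(n+3))^2 = (zz^n)^2 * zz^6 := by ring
    have p6 : (zz^(n+1))^6 = (zz^n)^6 * zz^6 := by ring
    have p6' : (zz^(n+2))^6 = (zz^n)^6 * zz^12 := by ring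
    have p4 : (zz^(n+1))^4 = (zz^n)^4 * zz^4 := by ring
    have g0 : a t n = bvar a t n + ((zz^n)^2)⁻¹ := hA n
    have g1 : a t (n+1) = bvar a t (n+1) + ((zz^n)^2 * zz^2)⁻¹ := by rw [hA (n+1), p2]
    have g2 : a t (n+2) = bvar a t (n+2) + ((zz^n)^2 * zz^4)⁻¹ := by rw [hA (n+2), p2']
    have g3 : a t (n+3) = bvar a t (n+3) + ((zz^n)^2 * zz^6)⁻¹ := by rw [hA (n+3), p2'']
    have eG1 : dyadicRHS (lam ^ (-(1:ℝ)/3)) (a t) (n+1)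
        = (zz^n)^6 * (a t n)^2 - (zz^n)^6 * zz^6 * a t (n+1) * a t (n+2) := by
      show lam ^ n * (a t n)^2 - lam ^ (n+1) * a t (n+1) * a t (n+2) = _
      rw [st2_lam_npow n, st2_lam_npow (n+1), p6]
    have eG2 : dyadicRHS (lam ^ (-(1:ℝ)/3)) (a t) (n+2)
        = (zz^n)^6 * zz^6 * (a t (n+1))^2 - (zz^n)^6 * zz^12 * a t (n+2) * a t (n+3) := by
      show lam ^ (n+1) * (a t (n+1))^2 - lam ^ (n+2) * a t (n+2) * a t (n+3) = _
      rw [st2_lam_npow (n+1), st2_lam_npow (n+2), p6, p6']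
    have ed : dvar a t (n+1) = (zz^n)^2 * (zz * bvar a t (n+1) - zz⁻¹ * bvar a t n) := by
      rw [dvar, st2_third, st2_sixth, st2_sixth_neg]
    have key : bvar a t (n+1) * dyadicRHS (lam ^ (-(1:ℝ)/3)) (a t) (n+1)
        + bvar a t (n+2) * dyadicRHS (lam ^ (-(1:ℝ)/3)) (a t) (n+2)
        = -(dvar a t (n+1))^2
          - (zz^n)^6 * zz^6 * a t (n+2) * (bvar a t (n+1))^2
          - (zz^n)^4 * zz^6 * (bvar a t (n+2))^2
          - (zz^n)^6 * zz^12 * a t (n+2) * bvar a t (n+2) * bvar a t (n+3)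
          + ((zz^n)^6 * a t (n+1) * (bvar a t n)^2
            + (zz^n)^4 * zz^2 * (bvar a t (n+1))^2
            + (zz^n)^6 * zz^6 * a t (n+1) * bvar a t (n+1) * bvar a t (n+2)) := by
      rw [eG1, eG2, ed, g0, g1, g2, g3]
      field_simp
      ring
    have hsplit : (∑ j ∈ Finset.range (n+1+1), 2 * bvar a t j * dyadicRHS (lam ^ (-(1:ℝ)/3)) (a t) j)
        = (∑ j ∈ Finset.range (n+1), 2 * bvar a t j * dyadicRHS (lam ^ (-(1:ℝ)/3)) (a t) j)
          + 2 * bvar a t (n+1) * dyadicRHS (lam ^ (-(1:ℝ)/3)) (a t) (n+1) :=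
      Finset.sum_range_succ _ _
    have hsplit2 : (∑ j ∈ Finset.range (n+1+1), (dvar a t j)^2)
        = (∑ j ∈ Finset.range (n+1), (dvar a t j)^2) + (dvar a t (n+1))^2 :=
      Finset.sum_range_succ _ _
    rw [hsplit, hsplit2, p6, p4, show n+1+1 = n+2 from rfl, show n+1+2 = n+3 from rfl]
    linarith [ih, key]

lemma st2_final (z Q bk bk1 uk uk1 M : ℝ) (hz1 : 1 ≤ z) (hz2 : z ≤ 2) (hQ : 0 < Q)
    (huk : 0 ≤ uk) (huk1 : 0 ≤ uk1)
    (hbk : uk = bk + (Q^2*z^2)⁻¹) (hbk1 : uk1 = bk1 + (Q^2*z^4)⁻¹)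
    (hM1 : |bk| ≤ M) (hM2 : |bk1| ≤ M) :
    -(Q^4*z^2*bk^2) - Q^6*z^6*uk*bk*bk1 ≤ Q^2 * M := by
  have hz0 : (0:ℝ) < z := lt_of_lt_of_le one_pos hz1
  have hzne : z ≠ 0 := hz0.ne'
  have hQne : Q ≠ 0 := hQ.ne'
  have hM0 : 0 ≤ M := le_trans (abs_nonneg _) hM1
  set x : ℝ := Q^2*z^2*uk with hx
  set y : ℝ := Q^2*z^4*uk1 with hy
  have hx0 : 0 ≤ x := by positivity
  have hy0 : 0 ≤ y := by positivity
  have e1 : x - 1 = Q^2*z^2*bk := by rw [hx, hbk]; field_simp; ring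
  have e2 : y - 1 = Q^2*z^4*bk1 := by rw [hy, hbk1]; field_simp; ring
  have main : z^2 * (-(Q^4*z^2*bk^2) - Q^6*z^6*uk*bk*bk1) = (x-1)*(1-x*y) := by
    rw [hx, hy, hbk, hbk1]
    field_simp
    ring
  have hb1 : bk ≤ M := le_trans (le_abs_self _) hM1
  have hb2 : bk1 ≤ M := le_trans (le_abs_self _) hM2
  have hRHS0 : 0 ≤ z^2 * (Q^2 * M) :=
    mul_nonneg (sq_nonneg z) (mul_nonneg (sq_nonneg Q) hM0)
  have hfin : (x-1)*(1-x*y) ≤ z^2 * (Q^2 * M) := by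
    rcases le_or_gt 1 x with hx1 | hx1
    · have h1 : (x-1)*(1-x*y) ≤ (x-1) * 1 := by
        apply mul_le_mul_of_nonneg_left _ (by linarith)
        nlinarith [mul_nonneg hx0 hy0]
      have h2 : x - 1 ≤ Q^2*z^2*M := by
        rw [e1]
        exact mul_le_mul_of_nonneg_left hb1 (by positivity)
      nlinarith [h1, h2]
    · rcases le_or_gt y 1 with hy1 | hy1
      · have hxy : x*y ≤ 1 := by nlinarith
        have hle : (x-1)*(1-x*y) ≤ 0 :=
          mul_nonpos_of_nonpos_of_nonneg (by linarith) (by linarith)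
        linarith
      · have h4 : 4*((x-1)*(1-x*y)) ≤ y - 1 := by
          nlinarith [sq_nonneg (2*x*y - y - 1)]
        have h5 : y - 1 ≤ Q^2*z^4*M := by
          rw [e2]
          exact mul_le_mul_of_nonneg_left hb2 (by positivity)
        have hz4 : z^2 ≤ 4 := by nlinarith
        have key6 : 0 ≤ (Q^2*z^2*M) * (4 - z^2) :=
          mul_nonneg (mul_nonneg (mul_nonneg (sq_nonneg Q) (sq_nonneg z)) hM0)
            (by linarith)
        linarith [h4, h5, key6]
  have hmul : z^2 * (-(Q^4*z^2*bk^2) - Q^6*z^6*uk*bk*bk1) ≤ z^2 * (Q^2*M) := by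
    rw [main]; exact hfin
  exact le_of_mul_le_mul_left hmul (by positivity)


theorem stability_two (a : ℝ → ℕ → ℝ) (ha : IsDyadicSolution (lam ^ (-(1:ℝ)/3)) a)
    (h0 : ∀ j, 0 ≤ a 0 j) :
    ∀ k : ℕ, 1 < k → ∀ t ∈ Ici (0:ℝ), ∀ D : ℝ,
      HasDerivWithinAt (fun s => (∑ j ∈ Finset.range k, (bvar a s j)^2) + (1/2) * (bvar a s k)^2)
        D (Ici 0) t →
      D ≤ -(∑ j ∈ Finset.range k, (dvar a t j)^2)
            + lam ^ (((k:ℝ)-1)/3) * Real.sqrt (∑' j, (bvar a t j)^2) := by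
  intro k hk t ht D hD
  have hf0 : 0 ≤ lam ^ (-(1:ℝ)/3) := (Real.rpow_pos_of_pos st2_lam_pos _).le
  have hpos := st2_apos hf0 ha h0
  obtain ⟨m, rfl⟩ : ∃ m, k = m + 1 := ⟨k - 1, by omega⟩
  -- summability of b² and the ℓ∞ bound by the ℓ² norm
  have hsummable : Summable (fun j => (bvar a t j)^2) := by
    have h1 := ha.1 t ht
    have hr : ((zz^4)⁻¹ : ℝ) < 1 := inv_lt_one_of_one_lt₀ (one_lt_pow₀ st2_zz_one_lt (by norm_num))
    have hgeo : Summable (fun j : ℕ => ((zz^4)⁻¹)^j) :=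
      summable_geometric_of_lt_one (by positivity) hr
    apply Summable.of_nonneg_of_le (fun j => sq_nonneg _) (fun j => ?_)
      ((h1.mul_left 2).add (hgeo.mul_left 2))
    have hcj : (lam ^ (-(j:ℝ)/3))^2 = ((zz^4)⁻¹)^j := by
      rw [st2_c_eq j]
      field_simp
      ring
    have hb2 : (bvar a t j)^2 ≤ 2*(a t j)^2 + 2*(lam ^ (-(j:ℝ)/3))^2 := by
      rw [bvar]
      nlinarith [sq_nonneg (a t j + lam ^ (-(j:ℝ)/3))]
    rw [hcj] at hb2
    exact hb2
  have hMj : ∀ j, |bvar a t j| ≤ Real.sqrt (∑' i, (bvar a t i)^2) := by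
    intro j
    rw [← Real.sqrt_sq_eq_abs]
    exact Real.sqrt_le_sqrt (Summable.le_tsum hsummable j (fun i _ => sq_nonneg _))
  -- identify D with the explicit derivative
  have hb : ∀ i, HasDerivWithinAt (fun s => bvar a s i)
      (dyadicRHS (lam ^ (-(1:ℝ)/3)) (a t) i) (Ici 0) t := by
    intro i
    have := (ha.2 i t ht).sub_const (lam ^ (-(i:ℝ)/3))
    simpa [bvar] using this
  have hsq : ∀ i, HasDerivWithinAt (fun s => (bvar a s i)^2)
      (2 * bvar a t i * dyadicRHS (lam ^ (-(1:ℝ)/3)) (a t) i) (Ici 0) t := by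
    intro i
    have h2 := (hb i).fun_pow 2
    refine h2.congr_deriv ?_
    push_cast
    ring
  have hsum : HasDerivWithinAt (fun s => ∑ j ∈ Finset.range (m+1), (bvar a s j)^2)
      (∑ j ∈ Finset.range (m+1), 2 * bvar a t j * dyadicRHS (lam ^ (-(1:ℝ)/3)) (a t) j)
      (Ici 0) t :=
    HasDerivWithinAt.fun_sum (fun j _ => hsq j)
  have hhalf := (hsq (m+1)).const_mul (1/2 : ℝ)
  have hD2 : HasDerivWithinAt
      (fun s => (∑ j ∈ Finset.range (m+1), (bvar a s j)^2) + (1/2) * (bvar a s (m+1))^2)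
      ((∑ j ∈ Finset.range (m+1), 2 * bvar a t j * dyadicRHS (lam ^ (-(1:ℝ)/3)) (a t) j)
        + bvar a t (m+1) * dyadicRHS (lam ^ (-(1:ℝ)/3)) (a t) (m+1)) (Ici 0) t := by
    have h3 := hsum.fun_add hhalf
    refine h3.congr_deriv ?_
    ring
  have hDeq : D = (∑ j ∈ Finset.range (m+1), 2 * bvar a t j * dyadicRHS (lam ^ (-(1:ℝ)/3)) (a t) j)
      + bvar a t (m+1) * dyadicRHS (lam ^ (-(1:ℝ)/3)) (a t) (m+1) := by
    have u1 := hD.derivWithin (uniqueDiffOn_Ici 0 t ht)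
    have u2 := hD2.derivWithin (uniqueDiffOn_Ici 0 t ht)
    rw [← u1, ← u2]
  rw [hDeq, st2_key a t m]
  have hexp : lam ^ ((((m+1:ℕ):ℝ) - 1)/3) = (zz^m)^2 := by
    have he : (((m+1:ℕ):ℝ) - 1)/3 = (m:ℝ)/3 := by push_cast; ring
    rw [he, st2_third]
  rw [hexp]
  have hu1 : 0 ≤ a t (m+1) := hpos (m+1) t ht
  have hu2 : 0 ≤ a t (m+2) := hpos (m+2) t ht
  have hA1 : a t (m+1) = bvar a t (m+1) + ((zz^m)^2*zz^2)⁻¹ := by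
    rw [bvar, st2_c_eq (m+1), show ((zz^(m+1))^2 : ℝ) = (zz^m)^2*zz^2 from by ring]
    ring
  have hA2 : a t (m+2) = bvar a t (m+2) + ((zz^m)^2*zz^4)⁻¹ := by
    rw [bvar, st2_c_eq (m+2), show ((zz^(m+2))^2 : ℝ) = (zz^m)^2*zz^4 from by ring]
    ring
  have ht1 : 0 ≤ (zz^m)^6 * a t (m+1) * (bvar a t m)^2 :=
    mul_nonneg (mul_nonneg (by positivity) hu1) (sq_nonneg _)
  have ht23 := st2_final zz (zz^m) (bvar a t (m+1)) (bvar a t (m+2)) (a t (m+1)) (a t (m+2))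
    (Real.sqrt (∑' i, (bvar a t i)^2)) st2_zz_one_lt.le st2_zz_le_two
    (pow_pos st2_zz_pos m) hu1 hu2 hA1 hA2 (hMj (m+1)) (hMj (m+2))
  linarith [ht1, ht23]
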